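/- Let k be a field and n ≥ 3. If r, s are positive integers with gcd(r,s) = 1, then the ideal generated by x_1^r - x_2^s in the formal power series ring k[[x_1,...,x_n]] is a prime ideal. -/

import Mathlib

open MvPowerSeries Finsupp Finset

namespace Stmt2Aux

variable {σ : Type*} [DecidableEq σ] (i0 i1 : σ)

/-- the part of an exponent away from the two distinguished variables -/
noncomputable def core (e : σ →₀ ℕ) : σ →₀ ℕ := (e.erase i0).erase i1

/-- replace the exponents at `i0`, `i1` by `a`, `b`. -/
noncomputable def adj (e : σ →₀ ℕ) (a b : ℕ) : σ →₀ ℕ :=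
  core i0 i1 e + Finsupp.single i0 a + Finsupp.single i1 b

variable (hne : i0 ≠ i1)

theorem core_apply (e : σ →₀ ℕ) (i : σ) :
    core i0 i1 e i = if i = i0 ∨ i = i1 then 0 else e i := by
  unfold core
  rcases eq_or_ne i i1 with h|h
  · simp [h]
  rcases eq_or_ne i i0 with h0|h0
  · simp [h, h0, Finsupp.erase_apply]
  · simp [h, h0, Finsupp.erase_apply]

include hne

theorem adj_apply0 (e : σ →₀ ℕ) (a b : ℕ) : adj i0 i1 e a b i0 = a := by
  simp [adj, core_apply, Finsupp.single_apply, hne, hne.symm]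

theorem adj_apply1 (e : σ →₀ ℕ) (a b : ℕ) : adj i0 i1 e a b i1 = b := by
  simp [adj, core_apply, Finsupp.single_apply, hne, hne.symm]

theorem adj_apply_ne (e : σ →₀ ℕ) (a b : ℕ) {i : σ} (h0 : i ≠ i0) (h1 : i ≠ i1) :
    adj i0 i1 e a b i = e i := by
  simp [adj, core_apply, Finsupp.single_apply, h0, h1, h0.symm, h1.symm]

theorem adj_self (e : σ →₀ ℕ) : adj i0 i1 e (e i0) (e i1) = e := by
  ext i
  rcases eq_or_ne i i0 with h|h0; · simp [h, adj_apply0 _ _ hne]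
  rcases eq_or_ne i i1 with h|h1; · simp [h, adj_apply1 _ _ hne]
  exact adj_apply_ne _ _ hne _ _ _ h0 h1

theorem adj_congr {e e' : σ →₀ ℕ} (a b : ℕ)
    (h : ∀ i, i ≠ i0 → i ≠ i1 → e i = e' i) : adj i0 i1 e a b = adj i0 i1 e' a b := by
  ext i
  rcases eq_or_ne i i0 with h'|h0; · simp [h', adj_apply0 _ _ hne]
  rcases eq_or_ne i i1 with h'|h1; · simp [h', adj_apply1 _ _ hne]
  rw [adj_apply_ne _ _ hne _ _ _ h0 h1, adj_apply_ne _ _ hne _ _ _ h0 h1, h i h0 h1]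

theorem adj_adj (e : σ →₀ ℕ) (a b c d : ℕ) :
    adj i0 i1 (adj i0 i1 e a b) c d = adj i0 i1 e c d :=
  adj_congr _ _ hne _ _ (fun i h0 h1 => adj_apply_ne _ _ hne _ _ _ h0 h1)

theorem adj_add (e e' : σ →₀ ℕ) (a b a' b' : ℕ) :
    adj i0 i1 e a b + adj i0 i1 e' a' b' = adj i0 i1 (e + e') (a + a') (b + b') := by
  ext i
  rcases eq_or_ne i i0 with h'|h0; · simp [h', adj_apply0 _ _ hne]
  rcases eq_or_ne i i1 with h'|h1; · simp [h', adj_apply1 _ _ hne]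
  simp [adj_apply_ne _ _ hne _ _ _ h0 h1]

theorem adj_eq_iff {e e' : σ →₀ ℕ} {a b a' b' : ℕ} :
    adj i0 i1 e a b = adj i0 i1 e' a' b' ↔
      a = a' ∧ b = b' ∧ ∀ i, i ≠ i0 → i ≠ i1 → e i = e' i := by
  constructor
  · intro h
    refine ⟨?_, ?_, fun i h0 h1 => ?_⟩
    · have := DFunLike.congr_fun h i0
      simpa [adj_apply0 _ _ hne] using this
    · have := DFunLike.congr_fun h i1
      simpa [adj_apply1 _ _ hne] using this
    · have := DFunLike.congr_fun h i
      simpa [adj_apply_ne _ _ hne _ _ _ h0 h1] using this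
  · rintro ⟨rfl, rfl, h⟩
    exact adj_congr _ _ hne _ _ h

variable (r s : ℕ)

/-- exponent substitution corresponding to `x₀ ↦ t^s`, `x₁ ↦ t^r`. -/
noncomputable def T (e : σ →₀ ℕ) : σ →₀ ℕ := adj i0 i1 e (s * e i0 + r * e i1) 0

theorem T_add (e e' : σ →₀ ℕ) : T i0 i1 r s (e + e') = T i0 i1 r s e + T i0 i1 r s e' := by
  unfold T
  rw [adj_add _ _ hne]
  have h1 : (s * (e + e') i0 + r * (e + e') i1) =
      (s * e i0 + r * e i1) + (s * e' i0 + r * e' i1) := by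
    simp [Finsupp.add_apply]; ring
  rw [h1]

theorem T_zero : T i0 i1 r s 0 = 0 := by
  unfold T
  ext i
  rcases eq_or_ne i i0 with h'|h0; · simp [h', adj_apply0 _ _ hne]
  rcases eq_or_ne i i1 with h'|h1; · simp [h', adj_apply1 _ _ hne]
  simp [adj_apply_ne _ _ hne _ _ _ h0 h1]

variable (hr : 0 < r) (hs : 0 < s)

/-- the fiber of `T` over `E`, as a finset. -/
noncomputable def fib (E : σ →₀ ℕ) : Finset (σ →₀ ℕ) :=
  (Finset.Iic (adj i0 i1 E (E i0) (E i0))).filter (fun e => T i0 i1 r s e = E)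

include hr hs in
theorem mem_fib {E e : σ →₀ ℕ} : e ∈ fib i0 i1 r s E ↔ T i0 i1 r s e = E := by
  rw [fib, Finset.mem_filter, and_iff_right_iff_imp]
  intro hT
  rw [Finset.mem_Iic, Finsupp.le_def]
  have h0 : s * e i0 + r * e i1 = E i0 := by
    have := DFunLike.congr_fun hT i0
    simpa [T, adj_apply0 _ _ hne] using this
  intro i
  rcases eq_or_ne i i0 with h'|h0'
  · rw [h', adj_apply0 _ _ hne]
    calc e i0 ≤ s * e i0 := Nat.le_mul_of_pos_left _ hs
    _ ≤ _ := by omega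
  rcases eq_or_ne i i1 with h'|h1'
  · rw [h', adj_apply1 _ _ hne]
    calc e i1 ≤ r * e i1 := Nat.le_mul_of_pos_left _ hr
    _ ≤ _ := by omega
  · rw [adj_apply_ne _ _ hne _ _ _ h0' h1']
    have := DFunLike.congr_fun hT i
    rw [T, adj_apply_ne _ _ hne _ _ _ h0' h1'] at this
    omega


/-- substitution `x₀ ↦ t^s, x₁ ↦ t^r` as a ring hom on power series. -/
noncomputable def phi {k : Type*} [CommRing k] (hne : i0 ≠ i1) (hr : 0 < r) (hs : 0 < s) :
    MvPowerSeries σ k →+* MvPowerSeries σ k where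
  toFun f := fun E => ∑ e ∈ fib i0 i1 r s E, MvPowerSeries.coeff e f
  map_zero' := by
    apply MvPowerSeries.ext; intro E
    show (∑ e ∈ fib i0 i1 r s E, MvPowerSeries.coeff e (0 : MvPowerSeries σ k)) =
      MvPowerSeries.coeff E 0
    simp
  map_add' f g := by
    apply MvPowerSeries.ext; intro E
    show (∑ e ∈ fib i0 i1 r s E, MvPowerSeries.coeff e (f + g)) =
      MvPowerSeries.coeff E
        (((fun E => ∑ e ∈ fib i0 i1 r s E, MvPowerSeries.coeff e f) : MvPowerSeries σ k) +
         ((fun E => ∑ e ∈ fib i0 i1 r s E, MvPowerSeries.coeff e g) : MvPowerSeries σ k))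
    erw [map_add]
    show _ = (∑ e ∈ fib i0 i1 r s E, MvPowerSeries.coeff e f) +
      (∑ e ∈ fib i0 i1 r s E, MvPowerSeries.coeff e g)
    simp [Finset.sum_add_distrib]
  map_one' := by
    apply MvPowerSeries.ext; intro E
    show (∑ e ∈ fib i0 i1 r s E, MvPowerSeries.coeff e (1 : MvPowerSeries σ k)) =
      MvPowerSeries.coeff E 1
    simp only [MvPowerSeries.coeff_one]
    rw [Finset.sum_ite_eq' (fib i0 i1 r s E) 0 (fun _ => (1:k))]
    by_cases h : E = 0
    · subst h
      rw [if_pos rfl, if_pos]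
      rw [mem_fib _ _ hne _ _ hr hs, T_zero _ _ hne]
    · rw [if_neg h, if_neg]
      rw [mem_fib _ _ hne _ _ hr hs, T_zero _ _ hne]
      exact fun h' => h h'.symm
  map_mul' f g := by
    apply MvPowerSeries.ext; intro E
    erw [MvPowerSeries.coeff_mul]
    show (∑ e ∈ fib i0 i1 r s E, MvPowerSeries.coeff e (f * g)) = _
    have hco : ∀ (h : MvPowerSeries σ k) (P : σ →₀ ℕ),
        MvPowerSeries.coeff P
          ((fun E => ∑ e ∈ fib i0 i1 r s E, MvPowerSeries.coeff e h) : MvPowerSeries σ k) =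
        ∑ e ∈ fib i0 i1 r s P, MvPowerSeries.coeff e h := fun _ _ => rfl
    simp only [hco, MvPowerSeries.coeff_mul]
    have hRHS : ∀ P : (σ →₀ ℕ) × (σ →₀ ℕ),
        (∑ e ∈ fib i0 i1 r s P.1, MvPowerSeries.coeff e f) *
          (∑ e ∈ fib i0 i1 r s P.2, MvPowerSeries.coeff e g) =
        ∑ pq ∈ fib i0 i1 r s P.1 ×ˢ fib i0 i1 r s P.2,
          MvPowerSeries.coeff pq.1 f * MvPowerSeries.coeff pq.2 g := by
      intro P
      rw [Finset.sum_mul_sum, ← Finset.sum_product']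
    simp only [hRHS]
    rw [← Finset.sum_biUnion, ← Finset.sum_biUnion]
    · apply Finset.sum_congr _ (fun _ _ => rfl)
      ext pq
      simp only [Finset.mem_biUnion, Finset.HasAntidiagonal.mem_antidiagonal, Finset.mem_product,
        mem_fib _ _ hne _ _ hr hs]
      constructor
      · rintro ⟨e, he, hpq⟩
        exact ⟨(T i0 i1 r s pq.1, T i0 i1 r s pq.2), by
          rw [← T_add _ _ hne, hpq, he], rfl, rfl⟩
      · rintro ⟨P, hP, h1, h2⟩
        exact ⟨pq.1 + pq.2, by rw [T_add _ _ hne, h1, h2, hP], rfl⟩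
    · intro P hP Q hQ hPQ
      simp only [Function.onFun, Finset.disjoint_left]
      intro pq h1 h2
      apply hPQ
      simp only [Finset.mem_product, mem_fib _ _ hne _ _ hr hs] at h1 h2
      have h3 : P = (T i0 i1 r s pq.1, T i0 i1 r s pq.2) := by
        rw [h1.1, h1.2]
      rw [h3, h2.1, h2.2]
    · intro e he e' he' hee
      simp only [Function.onFun, Finset.disjoint_left]
      intro pq h1 h2
      apply hee
      rw [Finset.HasAntidiagonal.mem_antidiagonal] at h1 h2
      rw [← h1, h2]

include hr hs in
theorem coeff_phi {k : Type*} [CommRing k]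
    (f : MvPowerSeries σ k) (E : σ →₀ ℕ) :
    MvPowerSeries.coeff E (phi i0 i1 r s hne hr hs f) =
      ∑ e ∈ fib i0 i1 r s E, MvPowerSeries.coeff e f := rfl

include hne hr hs in
theorem fib_image (hrs : Nat.gcd r s = 1) (E : σ →₀ ℕ) (hA : E i0 < r) :
    fib i0 i1 r s (T i0 i1 r s E) =
      (Finset.range (E i1 / s + 1)).image
        (fun j => adj i0 i1 E (E i0 + r * j) (E i1 - s * j)) := by
  ext e
  rw [mem_fib _ _ hne _ _ hr hs, Finset.mem_image]
  constructor
  · intro hT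
    rw [T, T, adj_eq_iff _ _ hne] at hT
    obtain ⟨hval, -, hcore⟩ := hT
    -- e i0 ≡ E i0 mod r
    have hmod : e i0 % r = E i0 % r := by
      have h6 : (s * e i0 + r * e i1) % r = (s * E i0 + r * E i1) % r := by rw [hval]
      rw [Nat.add_mul_mod_self_left, Nat.add_mul_mod_self_left] at h6
      exact Nat.ModEq.cancel_left_of_coprime hrs h6
    rw [Nat.mod_eq_of_lt hA] at hmod
    set j := e i0 / r with hj
    have he0 : e i0 = E i0 + r * j := by
      have h9 := Nat.div_add_mod (e i0) r
      rw [← hj] at h9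
      omega
    have key : s * j + e i1 = E i1 := by
      have h7 : s * E i0 + (r * (s * j) + r * e i1) = s * E i0 + r * E i1 := by
        calc s * E i0 + (r * (s * j) + r * e i1)
            = s * (E i0 + r * j) + r * e i1 := by ring
          _ = s * E i0 + r * E i1 := by rw [← he0]; exact hval
      have h8 := Nat.add_left_cancel h7
      rw [← Nat.mul_add] at h8
      exact Nat.eq_of_mul_eq_mul_left hr h8
    refine ⟨j, ?_, ?_⟩
    · rw [Finset.mem_range]
      have : j * s ≤ E i1 := by rw [Nat.mul_comm]; omega
      have := (Nat.le_div_iff_mul_le hs).mpr this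
      omega
    · have he1 : e i1 = E i1 - s * j := by omega
      rw [← he0, ← he1]
      rw [adj_congr _ _ hne _ _ (fun i h0 h1 => (hcore i h0 h1).symm)]
      exact adj_self _ _ hne e
  · rintro ⟨j, hj, rfl⟩
    rw [Finset.mem_range] at hj
    have hsj : s * j ≤ E i1 := by
      calc s * j ≤ s * (E i1 / s) := Nat.mul_le_mul_left s (by omega)
        _ = E i1 / s * s := Nat.mul_comm _ _
        _ ≤ E i1 := Nat.div_mul_le_self _ _
    rw [T, T]
    rw [adj_apply0 _ _ hne, adj_apply1 _ _ hne]
    rw [adj_adj _ _ hne]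
    have harith : s * (E i0 + r * j) + r * (E i1 - s * j) = s * E i0 + r * E i1 := by
      obtain ⟨C, hC⟩ := Nat.exists_eq_add_of_le hsj
      rw [hC, Nat.add_sub_cancel_left]
      ring
    rw [harith]

theorem sub_single0 (E : σ →₀ ℕ) (c : ℕ) :
    E - Finsupp.single i0 c = adj i0 i1 E (E i0 - c) (E i1) := by
  ext i
  rw [Finsupp.tsub_apply]
  rcases eq_or_ne i i0 with h'|h0
  · rw [h', adj_apply0 _ _ hne, Finsupp.single_eq_same]
  rcases eq_or_ne i i1 with h'|h1
  · rw [h', adj_apply1 _ _ hne, Finsupp.single_eq_of_ne' hne]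
    omega
  · rw [adj_apply_ne _ _ hne _ _ _ h0 h1, Finsupp.single_eq_of_ne' (Ne.symm h0)]
    omega

theorem sub_single1 (E : σ →₀ ℕ) (c : ℕ) :
    E - Finsupp.single i1 c = adj i0 i1 E (E i0) (E i1 - c) := by
  ext i
  rw [Finsupp.tsub_apply]
  rcases eq_or_ne i i0 with h'|h0
  · rw [h', adj_apply0 _ _ hne, Finsupp.single_eq_of_ne' hne.symm]
    omega
  rcases eq_or_ne i i1 with h'|h1
  · rw [h', adj_apply1 _ _ hne, Finsupp.single_eq_same]
  · rw [adj_apply_ne _ _ hne _ _ _ h0 h1, Finsupp.single_eq_of_ne' (Ne.symm h1)]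
    omega

include hr hs in
theorem phi_monomial {k : Type*} [CommRing k] (d : σ →₀ ℕ) (a : k) :
    phi i0 i1 r s hne hr hs (MvPowerSeries.monomial d a) =
      MvPowerSeries.monomial (T i0 i1 r s d) a := by
  apply MvPowerSeries.ext; intro E
  rw [coeff_phi, MvPowerSeries.coeff_monomial]
  simp only [MvPowerSeries.coeff_monomial]
  rw [Finset.sum_ite_eq' (fib i0 i1 r s E) d (fun _ => a)]
  by_cases h : d ∈ fib i0 i1 r s E
  · rw [if_pos h, if_pos]
    rw [mem_fib _ _ hne _ _ hr hs] at h
    exact h.symm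
  · rw [if_neg h, if_neg]
    intro h'
    apply h
    rw [mem_fib _ _ hne _ _ hr hs]
    exact h'.symm

theorem T_single_eq : T i0 i1 r s (Finsupp.single i0 r) = T i0 i1 r s (Finsupp.single i1 s) := by
  have h1 : (Finsupp.single i0 r) i0 = r := Finsupp.single_eq_same
  have h2 : (Finsupp.single i0 r) i1 = 0 := Finsupp.single_eq_of_ne' hne
  have h3 : (Finsupp.single i1 s) i0 = 0 := Finsupp.single_eq_of_ne' hne.symm
  have h4 : (Finsupp.single i1 s) i1 = s := Finsupp.single_eq_same
  rw [T, T, h1, h2, h3, h4]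
  rw [adj_congr i0 i1 hne _ _ (e' := Finsupp.single i1 s) (fun i h0 h1 => by
    rw [Finsupp.single_eq_of_ne' (Ne.symm h0), Finsupp.single_eq_of_ne' (Ne.symm h1)])]
  have : s * r + r * 0 = s * 0 + r * s := by ring
  rw [this]

include hr hs in
theorem phi_gen {k : Type*} [CommRing k] :
    phi i0 i1 r s hne hr hs ((MvPowerSeries.X i0 : MvPowerSeries σ k) ^ r -
      MvPowerSeries.X i1 ^ s) = 0 := by
  rw [map_sub, MvPowerSeries.X_pow_eq, MvPowerSeries.X_pow_eq,
    phi_monomial _ _ hne _ _ hr hs _ _, phi_monomial _ _ hne _ _ hr hs _ _,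
    T_single_eq _ _ hne, sub_self]

include hne hr hs in
theorem mem_span_of_phi_eq_zero {k : Type*} [CommRing k] (hrs : Nat.gcd r s = 1)
    (f : MvPowerSeries σ k) (hf : phi i0 i1 r s hne hr hs f = 0) :
    f ∈ Ideal.span {(MvPowerSeries.X i0 : MvPowerSeries σ k) ^ r - MvPowerSeries.X i1 ^ s} := by
  classical
  set q : MvPowerSeries σ k := fun d => ∑ j ∈ Finset.range (d i1 / s + 1),
    MvPowerSeries.coeff (adj i0 i1 d (d i0 + r * (j+1)) (d i1 - s * j)) f with hqdef
  have coeff_q : ∀ d : σ →₀ ℕ, MvPowerSeries.coeff d q = ∑ j ∈ Finset.range (d i1 / s + 1),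
      MvPowerSeries.coeff (adj i0 i1 d (d i0 + r * (j+1)) (d i1 - s * j)) f := fun _ => rfl
  refine Ideal.mem_span_singleton.2 ⟨q, ?_⟩
  apply MvPowerSeries.ext; intro E
  set A := E i0 with hA'
  set B := E i1 with hB'
  set F : ℕ → k := fun j => MvPowerSeries.coeff (adj i0 i1 E (A + r*j) (B - s*j)) f with hF
  have hF0 : F 0 = MvPowerSeries.coeff E f := by
    rw [hF]
    simp only [Nat.mul_zero, Nat.add_zero, Nat.sub_zero]
    rw [hA', hB', adj_self _ _ hne]
  have hK : A < r → ∑ j ∈ Finset.range (B / s + 1), F j = 0 := by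
    intro hA
    have h0 : MvPowerSeries.coeff (T i0 i1 r s E) (phi i0 i1 r s hne hr hs f) = 0 := by
      rw [hf]; simp
    rw [coeff_phi, fib_image _ _ hne _ _ hr hs hrs E hA, Finset.sum_image] at h0
    · exact h0
    · intro x _ y _ hxy
      rw [adj_eq_iff _ _ hne] at hxy
      have h1 : E i0 + r * x = E i0 + r * y := hxy.1
      have h2 : r * x = r * y := by omega
      exact Nat.eq_of_mul_eq_mul_left hr h2
  -- compute the two pieces of the product coefficient
  have hq0 : r ≤ A → MvPowerSeries.coeff (adj i0 i1 E (A - r) B) q =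
      ∑ j ∈ Finset.range (B / s + 1), F j := by
    intro h
    rw [coeff_q, adj_apply0 _ _ hne, adj_apply1 _ _ hne]
    apply Finset.sum_congr rfl
    intro j _
    rw [adj_adj _ _ hne]
    have harith : A - r + r * (j+1) = A + r * j := by rw [Nat.mul_succ]; omega
    rw [harith]
  have hq1 : s ≤ B → MvPowerSeries.coeff (adj i0 i1 E A (B - s)) q =
      ∑ j ∈ Finset.range (B / s), F (j+1) := by
    intro h
    rw [coeff_q, adj_apply0 _ _ hne, adj_apply1 _ _ hne]
    rw [show (B - s) / s + 1 = B / s from (Nat.div_eq_sub_div hs h).symm]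
    apply Finset.sum_congr rfl
    intro j _
    rw [adj_adj _ _ hne]
    have harith : B - s - s * j = B - s * (j+1) := by rw [Nat.mul_succ]; omega
    rw [harith]
  rw [sub_mul, map_sub, MvPowerSeries.X_pow_eq, MvPowerSeries.X_pow_eq,
    MvPowerSeries.coeff_monomial_mul, MvPowerSeries.coeff_monomial_mul]
  simp only [Finsupp.single_le_iff, one_mul, sub_single0 _ _ hne, sub_single1 _ _ hne, ← hA', ← hB']
  by_cases hAr : r ≤ A <;> by_cases hBs : s ≤ B
  · rw [if_pos hAr, if_pos hBs, hq0 hAr, hq1 hBs, Finset.sum_range_succ']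
    rw [hF0]
    ring
  · rw [if_pos hAr, if_neg hBs, hq0 hAr]
    rw [show B / s = 0 from Nat.div_eq_of_lt (by omega)]
    rw [Finset.sum_range_one, hF0]
    ring
  · rw [if_neg hAr, if_pos hBs, hq1 hBs]
    have h1 := hK (by omega)
    rw [Finset.sum_range_succ', hF0] at h1
    linear_combination h1
  · rw [if_neg hAr, if_neg hBs]
    have h1 := hK (by omega)
    rw [show B / s = 0 from Nat.div_eq_of_lt (by omega), Finset.sum_range_one, hF0] at h1
    rw [h1]
    ring

end Stmt2Aux

/-- For a field `k` and `n ≥ 3`, if `gcd(r,s) = 1` with `r, s > 0`, then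
the ideal generated by `x₁^r - x₂^s` in `k[[x₁,…,xₙ]]` is prime. -/
theorem stmt2 (k : Type*) [Field k] (n : ℕ) (hn : 3 ≤ n) (r s : ℕ)
    (hr : 0 < r) (hs : 0 < s) (hrs : Nat.gcd r s = 1) :
    (Ideal.span {(MvPowerSeries.X ⟨0, by omega⟩ : MvPowerSeries (Fin n) k) ^ r -
        MvPowerSeries.X ⟨1, by omega⟩ ^ s}).IsPrime := by
  classical
  have h0 : (0 : ℕ) < n := by omega
  have h1 : (1 : ℕ) < n := by omega
  set i0 : Fin n := ⟨0, h0⟩ with hi0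
  set i1 : Fin n := ⟨1, h1⟩ with hi1
  have hne : i0 ≠ i1 := by
    simp [hi0, hi1, Fin.ext_iff]
  show (Ideal.span {(MvPowerSeries.X i0 : MvPowerSeries (Fin n) k) ^ r -
      MvPowerSeries.X i1 ^ s}).IsPrime
  have hker : Ideal.span {(MvPowerSeries.X i0 : MvPowerSeries (Fin n) k) ^ r -
      MvPowerSeries.X i1 ^ s} = RingHom.ker (Stmt2Aux.phi i0 i1 r s hne hr hs) := by
    apply le_antisymm
    · rw [Ideal.span_le, Set.singleton_subset_iff]
      exact RingHom.mem_ker.2 (Stmt2Aux.phi_gen i0 i1 hne r s hr hs)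
    · intro f hf
      exact Stmt2Aux.mem_span_of_phi_eq_zero i0 i1 hne r s hr hs hrs f (RingHom.mem_ker.1 hf)
  rw [hker]
  haveI : IsDomain (MvPowerSeries (Fin n) k) := NoZeroDivisors.to_isDomain _
  exact RingHom.ker_isPrime _
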